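/- Let Φ^{-1} denote the quantile function of the standard normal distribution. Then as v ↑ 1, Φ^{-1}(v) / √(2 log(1/(1−v))) → 1. -/

import Mathlib

open MeasureTheory ProbabilityTheory Real Filter

/-- standard normal density -/
noncomputable def stdPDF (x : ℝ) : ℝ := (Real.sqrt (2 * Real.pi))⁻¹ * Real.exp (-(x ^ 2) / 2)

/-- standard normal CDF -/
noncomputable def stdCDF (x : ℝ) : ℝ := ∫ t in Set.Iic x, stdPDF t

lemma stdPDF_eq : stdPDF = fun x : ℝ =>
    (Real.sqrt (2 * Real.pi))⁻¹ * Real.exp (-(1/2) * x ^ 2) := by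
  funext x; unfold stdPDF; ring_nf

lemma stdPDF_pos (x : ℝ) : 0 < stdPDF x := by
  unfold stdPDF
  positivity

lemma integrable_stdPDF : Integrable stdPDF := by
  rw [stdPDF_eq]
  exact (integrable_exp_neg_mul_sq (by norm_num : (0:ℝ) < 1/2)).const_mul _

lemma integral_stdPDF : ∫ x, stdPDF x = 1 := by
  rw [stdPDF_eq]
  rw [MeasureTheory.integral_const_mul, integral_gaussian]
  have h : Real.pi / (1/2) = 2 * Real.pi := by ring
  rw [h]
  exact inv_mul_cancel₀ (Real.sqrt_ne_zero'.2 (by positivity))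

/-- upper tail -/
noncomputable def stdQ (x : ℝ) : ℝ := ∫ t in Set.Ioi x, stdPDF t

lemma stdQ_eq (x : ℝ) : stdQ x = 1 - stdCDF x := by
  have h := intervalIntegral.integral_Iic_add_Ioi (b := x)
    integrable_stdPDF.integrableOn integrable_stdPDF.integrableOn
  rw [integral_stdPDF] at h
  unfold stdQ stdCDF
  linarith

lemma stdQ_pos (x : ℝ) : 0 < stdQ x := by
  unfold stdQ
  rw [MeasureTheory.setIntegral_pos_iff_support_of_nonneg_ae
      (Filter.Eventually.of_forall fun t => (stdPDF_pos t).le)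
      integrable_stdPDF.integrableOn]
  have : Function.support stdPDF = Set.univ := by
    ext t; simp [Function.mem_support, (stdPDF_pos t).ne']
  rw [this, Set.univ_inter]
  simp [Real.volume_Ioi]

lemma stdCDF_pos (x : ℝ) : 0 < stdCDF x := by
  unfold stdCDF
  rw [MeasureTheory.setIntegral_pos_iff_support_of_nonneg_ae
      (Filter.Eventually.of_forall fun t => (stdPDF_pos t).le)
      integrable_stdPDF.integrableOn]
  have : Function.support stdPDF = Set.univ := by
    ext t; simp [Function.mem_support, (stdPDF_pos t).ne']
  rw [this, Set.univ_inter]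
  simp [Real.volume_Iic]

lemma stdCDF_lt_one (x : ℝ) : stdCDF x < 1 := by
  have := stdQ_pos x
  rw [stdQ_eq] at this
  linarith

lemma stdCDF_mono : Monotone stdCDF := by
  intro a b hab
  exact MeasureTheory.setIntegral_mono_set integrable_stdPDF.integrableOn
    (Filter.Eventually.of_forall fun t => (stdPDF_pos t).le)
    (HasSubset.Subset.eventuallyLE (Set.Iic_subset_Iic.2 hab))

lemma integral_mul_stdPDF_Ioi (x : ℝ) :
    ∫ t in Set.Ioi x, t * stdPDF t = stdPDF x := by
  have hderiv : ∀ t ∈ Set.Ici x, HasDerivAt (fun y => -stdPDF y) (t * stdPDF t) t := by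
    intro t _
    unfold stdPDF
    have h1 : HasDerivAt (fun y : ℝ => -(y ^ 2) / 2) (-t) t := by
      have := ((hasDerivAt_pow 2 t).neg).div_const 2
      exact this.congr_deriv (by norm_num; ring)
    have h2 := (h1.exp.const_mul ((Real.sqrt (2 * Real.pi))⁻¹)).neg
    exact h2.congr_deriv (by ring)
  have hint : IntegrableOn (fun t : ℝ => t * stdPDF t) (Set.Ioi x) := by
    have : Integrable (fun t : ℝ => t * stdPDF t) := by
      rw [stdPDF_eq]
      have := (integrable_mul_exp_neg_mul_sq (by norm_num : (0:ℝ) < 1/2)).const_mul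
        ((Real.sqrt (2 * Real.pi))⁻¹)
      convert this using 2 with t
      ring
    exact this.integrableOn
  have htend : Tendsto (fun y => -stdPDF y) atTop (nhds 0) := by
    rw [stdPDF_eq]
    rw [show (0:ℝ) = -((Real.sqrt (2 * Real.pi))⁻¹ * 0) by ring]
    refine (Tendsto.const_mul _ ?_).neg
    apply Real.tendsto_exp_atBot.comp
    have : Tendsto (fun y : ℝ => y ^ 2) atTop atTop := tendsto_pow_atTop two_ne_zero
    exact (this.const_mul_atTop_of_neg (by norm_num : (-(1:ℝ)/2) < 0)).congr
      (fun y => by ring)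
  have := MeasureTheory.integral_Ioi_of_hasDerivAt_of_tendsto' hderiv hint htend
  rw [this]
  simp

lemma stdQ_le (x : ℝ) (hx : 0 < x) : stdQ x ≤ stdPDF x / x := by
  have h1 : stdQ x ≤ ∫ t in Set.Ioi x, x⁻¹ * (t * stdPDF t) := by
    unfold stdQ
    refine MeasureTheory.setIntegral_mono_on integrable_stdPDF.integrableOn ?_
      measurableSet_Ioi ?_
    · have : Integrable (fun t : ℝ => t * stdPDF t) := by
        rw [stdPDF_eq]
        have := (integrable_mul_exp_neg_mul_sq (by norm_num : (0:ℝ) < 1/2)).const_mul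
          ((Real.sqrt (2 * Real.pi))⁻¹)
        convert this using 2 with t
        ring
      exact (this.const_mul _).integrableOn
    · intro t ht
      have htx : x ≤ t := (Set.mem_Ioi.1 ht).le
      have hp := stdPDF_pos t
      calc stdPDF t = x⁻¹ * (x * stdPDF t) := by field_simp
        _ ≤ x⁻¹ * (t * stdPDF t) :=
          mul_le_mul_of_nonneg_left (mul_le_mul_of_nonneg_right htx hp.le)
            (inv_nonneg.2 hx.le)
  rw [MeasureTheory.integral_const_mul, integral_mul_stdPDF_Ioi] at h1
  rw [div_eq_inv_mul]
  exact h1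

lemma stdPDF_antitone {a b : ℝ} (ha : 0 ≤ a) (hab : a ≤ b) : stdPDF b ≤ stdPDF a := by
  unfold stdPDF
  have h : Real.exp (-(b ^ 2) / 2) ≤ Real.exp (-(a ^ 2) / 2) :=
    Real.exp_le_exp.2 (by nlinarith)
  exact mul_le_mul_of_nonneg_left h (by positivity)

lemma stdQ_ge (x : ℝ) (hx : 0 ≤ x) : stdPDF (x + 1) ≤ stdQ x := by
  have h1 : stdPDF (x + 1) = ∫ _t in Set.Ioc x (x+1), stdPDF (x + 1) := by
    rw [MeasureTheory.setIntegral_const]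
    rw [Real.volume_real_Ioc]
    rw [show x + 1 - x = 1 by ring]
    simp
  rw [h1]
  have h2 : (∫ _t in Set.Ioc x (x+1), stdPDF (x + 1)) ≤ ∫ t in Set.Ioc x (x+1), stdPDF t := by
    refine MeasureTheory.setIntegral_mono_on (integrableOn_const ?_)
      integrable_stdPDF.integrableOn measurableSet_Ioc ?_
    · rw [Real.volume_Ioc]; exact ENNReal.ofReal_ne_top
    · intro t ht
      exact stdPDF_antitone (le_of_lt (lt_of_le_of_lt hx ht.1)) ht.2
  refine h2.trans ?_
  exact MeasureTheory.setIntegral_mono_set integrable_stdPDF.integrableOn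
    (Filter.Eventually.of_forall fun t => (stdPDF_pos t).le)
    (HasSubset.Subset.eventuallyLE Set.Ioc_subset_Ioi_self)

/-- the asymptotic ratio function -/
noncomputable def stdF (x : ℝ) : ℝ := x / Real.sqrt (2 * Real.log (1 / stdQ x))

lemma log_one_div_stdQ_lower {x : ℝ} (hx : 1 ≤ x) :
    x ^ 2 ≤ 2 * Real.log (1 / stdQ x) := by
  have hQpos := stdQ_pos x
  have hle : stdQ x ≤ Real.exp (-(x^2)/2) := by
    have h1 := stdQ_le x (by linarith)
    have h2 : stdPDF x / x ≤ stdPDF x := by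
      have := stdPDF_pos x
      calc stdPDF x / x ≤ stdPDF x / 1 := by gcongr
        _ = stdPDF x := by ring
    have h3 : stdPDF x ≤ Real.exp (-(x^2)/2) := by
      unfold stdPDF
      have hc : (Real.sqrt (2 * Real.pi))⁻¹ ≤ 1 := by
        rw [inv_le_one_iff₀]
        right
        rw [show (1:ℝ) = Real.sqrt 1 by simp]
        apply Real.sqrt_le_sqrt
        nlinarith [Real.pi_gt_three]
      nlinarith [Real.exp_pos (-(x^2)/2)]
    linarith
  have := Real.log_le_log hQpos hle
  rw [Real.log_exp] at this
  rw [Real.log_div one_ne_zero hQpos.ne', Real.log_one]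
  linarith

lemma log_one_div_stdQ_upper {x : ℝ} (hx : 1 ≤ x) :
    2 * Real.log (1 / stdQ x) ≤ (x + 1) ^ 2 + 2 * Real.log (Real.sqrt (2 * Real.pi)) := by
  have hQpos := stdQ_pos x
  have hge := stdQ_ge x (by linarith)
  have hsqrt_pos : (0:ℝ) < Real.sqrt (2 * Real.pi) := Real.sqrt_pos.2 (by positivity)
  have hlog : Real.log (stdPDF (x+1)) ≤ Real.log (stdQ x) := Real.log_le_log (stdPDF_pos _) hge
  have : Real.log (stdPDF (x+1)) =
      -Real.log (Real.sqrt (2 * Real.pi)) + (-((x+1)^2)/2) := by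
    unfold stdPDF
    rw [Real.log_mul (inv_ne_zero hsqrt_pos.ne') (Real.exp_ne_zero _),
      Real.log_inv, Real.log_exp]
  rw [this] at hlog
  rw [Real.log_div one_ne_zero hQpos.ne', Real.log_one]
  linarith

lemma tendsto_stdF : Tendsto stdF atTop (nhds 1) := by
  set C : ℝ := 2 * Real.log (Real.sqrt (2 * Real.pi)) with hC
  have hCnn : 0 ≤ C := by
    have : (1:ℝ) ≤ Real.sqrt (2 * Real.pi) := by
      rw [show (1:ℝ) = Real.sqrt 1 by simp]
      apply Real.sqrt_le_sqrt
      nlinarith [Real.pi_gt_three]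
    have := Real.log_nonneg this
    positivity
  set K : ℝ := 1 + Real.sqrt C with hK
  have hKnn : 0 ≤ K := by positivity
  -- lower bound function tends to 1
  have hlow : Tendsto (fun x : ℝ => x / (x + K)) atTop (nhds 1) := by
    have h0 : Tendsto (fun x : ℝ => K / (x + K)) atTop (nhds 0) :=
      Tendsto.div_atTop tendsto_const_nhds (tendsto_atTop_add_const_right _ K tendsto_id)
    have h1 : Tendsto (fun x : ℝ => 1 - K / (x + K)) atTop (nhds 1) := by
      have := (tendsto_const_nhds (x := (1:ℝ)) (f := atTop)).sub h0
      simpa using this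
    refine h1.congr' ?_
    filter_upwards [eventually_ge_atTop (1:ℝ)] with x hx
    have hxK : x + K ≠ 0 := by positivity
    field_simp
    ring
  refine tendsto_of_tendsto_of_tendsto_of_le_of_le' hlow tendsto_const_nhds ?_ ?_
  · -- x/(x+K) ≤ stdF x
    filter_upwards [eventually_ge_atTop (1:ℝ)] with x hx
    have hxpos : (0:ℝ) < x := by linarith
    have hD_lb : x ≤ Real.sqrt (2 * Real.log (1 / stdQ x)) :=
      Real.le_sqrt_of_sq_le (log_one_div_stdQ_lower hx)
    have hDpos : (0:ℝ) < Real.sqrt (2 * Real.log (1 / stdQ x)) := lt_of_lt_of_le hxpos hD_lb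
    have hD_ub : Real.sqrt (2 * Real.log (1 / stdQ x)) ≤ x + K := by
      refine Real.sqrt_le_iff.2 ⟨by positivity, ?_⟩
      refine (log_one_div_stdQ_upper hx).trans ?_
      have hsC : Real.sqrt C ^ 2 = C := Real.sq_sqrt hCnn
      have hsCnn : 0 ≤ Real.sqrt C := Real.sqrt_nonneg C
      rw [hK]
      nlinarith
    unfold stdF
    gcongr
  · -- stdF x ≤ 1
    filter_upwards [eventually_ge_atTop (1:ℝ)] with x hx
    have hxpos : (0:ℝ) < x := by linarith
    have hD_lb : x ≤ Real.sqrt (2 * Real.log (1 / stdQ x)) :=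
      Real.le_sqrt_of_sq_le (log_one_div_stdQ_lower hx)
    have hDpos : (0:ℝ) < Real.sqrt (2 * Real.log (1 / stdQ x)) := lt_of_lt_of_le hxpos hD_lb
    unfold stdF
    rw [div_le_one hDpos]
    exact hD_lb

/-- the standard normal quantile function satisfies
Φ⁻¹(v) / √(2 log(1/(1−v))) → 1 as v ↑ 1. -/
theorem stmt_4 (Φinv : ℝ → ℝ) (hΦinv : ∀ v ∈ Set.Ioo (0:ℝ) 1, stdCDF (Φinv v) = v) :
    Tendsto (fun v : ℝ => Φinv v / Real.sqrt (2 * Real.log (1 / (1 - v))))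
      (nhdsWithin 1 (Set.Iio 1)) (nhds 1) := by
  have hmem : Set.Ioo (0:ℝ) 1 ∈ nhdsWithin (1:ℝ) (Set.Iio 1) :=
    Ioo_mem_nhdsLT_of_mem (by constructor <;> norm_num)
  -- Φinv tends to atTop
  have htop : Tendsto Φinv (nhdsWithin (1:ℝ) (Set.Iio 1)) atTop := by
    rw [tendsto_atTop]
    intro M
    have h1 : Set.Ioo (stdCDF M) 1 ∈ nhdsWithin (1:ℝ) (Set.Iio 1) :=
      Ioo_mem_nhdsLT_of_mem ⟨stdCDF_lt_one M, le_refl _⟩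
    filter_upwards [h1] with v hv
    have hv01 : v ∈ Set.Ioo (0:ℝ) 1 := ⟨lt_trans (stdCDF_pos M) hv.1, hv.2⟩
    by_contra hcon
    push_neg at hcon
    have := stdCDF_mono hcon.le
    rw [hΦinv v hv01] at this
    exact absurd (lt_of_lt_of_le hv.1 this) (lt_irrefl _)
  have := tendsto_stdF.comp htop
  refine this.congr' ?_
  filter_upwards [hmem] with v hv
  have h1v : stdQ (Φinv v) = 1 - v := by
    rw [stdQ_eq, hΦinv v hv]
  simp only [Function.comp_apply, stdF, h1v]
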